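/- Let A = [[A_ff, A_fc],[A_cf, A_cc]] with A_ff invertible, let P = [[W],[I]] and R = [Z, I], and assume K = R·A·P is invertible. Then the C-component of (I − P·K⁻¹·R·A)·e vanishes for every vector e on F ⊕ C if and only if Z = −A_cf·A_ff⁻¹. Moreover, when Z = −A_cf·A_ff⁻¹, the coarse-grid correction error satisfies (I − P·K⁻¹·R·A)·e = (e_f − W·e_c, 0) for every e = (e_f, e_c). -/

import Mathlib

open Matrix

/-- **Ideal restriction (Lemma 2.1).** Coarse-grid correction `I − P·K⁻¹·R·A` is exact at
C-points for every error vector if and only if `Z = −A_cf·A_ff⁻¹`; moreover, in that case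
`(I − P·K⁻¹·R·A)·e = (e_f − W·e_c, 0)`. -/
theorem ideal_restriction_exact_at_C_points
    {F C : Type*} [Fintype F] [Fintype C] [DecidableEq F] [DecidableEq C]
    (Aff : Matrix F F ℝ) (Afc : Matrix F C ℝ) (Acf : Matrix C F ℝ) (Acc : Matrix C C ℝ)
    (W : Matrix F C ℝ) (Z : Matrix C F ℝ)
    (A : Matrix (F ⊕ C) (F ⊕ C) ℝ) (hA : A = fromBlocks Aff Afc Acf Acc)
    (P : Matrix (F ⊕ C) C ℝ) (hP : P = fromRows W 1)
    (R : Matrix C (F ⊕ C) ℝ) (hR : R = fromCols Z 1)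
    (K : Matrix C C ℝ) (hK : K = R * A * P)
    (hAff : IsUnit Aff) (hKinv : IsUnit K) :
    ((∀ e : (F ⊕ C) → ℝ, ∀ j : C, ((1 - P * K⁻¹ * R * A) *ᵥ e) (Sum.inr j) = 0) ↔
        Z = -(Acf * Aff⁻¹)) ∧
    (Z = -(Acf * Aff⁻¹) →
      ∀ e : (F ⊕ C) → ℝ,
        (1 - P * K⁻¹ * R * A) *ᵥ e =
          Sum.elim (fun i => e (Sum.inl i) - (W *ᵥ fun j => e (Sum.inr j)) i)
            (fun _ => 0)) := by
  have hAffdet : IsUnit Aff.det := (Matrix.isUnit_iff_isUnit_det Aff).mp hAff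
  have hKdet : IsUnit K.det := (Matrix.isUnit_iff_isUnit_det K).mp hKinv
  set X : Matrix C F ℝ := Z * Aff + Acf with hX
  set Y : Matrix C C ℝ := Z * Afc + Acc with hY
  have hRA : R * A = fromCols X Y := by
    rw [hR, hA, fromCols_mul_fromBlocks, Matrix.one_mul, Matrix.one_mul]
  have hKXY : K = X * W + Y := by
    rw [hK, hRA, hP, fromCols_mul_fromRows, Matrix.mul_one]
  have hM : 1 - P * K⁻¹ * R * A =
      fromBlocks (1 - W * (K⁻¹ * X)) (-(W * (K⁻¹ * Y))) (-(K⁻¹ * X)) (1 - K⁻¹ * Y) := by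
    have : P * K⁻¹ * R * A = fromBlocks (W * (K⁻¹ * X)) (W * (K⁻¹ * Y)) (K⁻¹ * X) (K⁻¹ * Y) := by
      rw [Matrix.mul_assoc, hRA, hP, fromRows_mul, Matrix.one_mul, fromRows_mul_fromCols,
        Matrix.mul_assoc W K⁻¹ X, Matrix.mul_assoc W K⁻¹ Y]
    rw [this, ← fromBlocks_one, sub_eq_add_neg, fromBlocks_neg, fromBlocks_add]
    simp [sub_eq_add_neg]
  constructor
  · constructor
    · intro h
      -- derive K⁻¹ * X = 0
      have hKX : K⁻¹ * X = 0 := by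
        ext j k
        have := h (Pi.single (Sum.inl k) 1) j
        rw [hM, mulVec_single] at this
        simpa [fromBlocks_apply₂₁, neg_eq_zero] using this
      have hX0 : X = 0 := by
        have : K * (K⁻¹ * X) = X := by
          rw [← Matrix.mul_assoc, Matrix.mul_nonsing_inv K hKdet, Matrix.one_mul]
        rw [hKX, Matrix.mul_zero] at this
        exact this.symm
      have : Z * Aff = -Acf := by
        have := hX0
        rw [hX] at this
        linear_combination (norm := noncomm_ring) this
      calc Z = Z * Aff * Aff⁻¹ := by
              rw [Matrix.mul_assoc, Matrix.mul_nonsing_inv Aff hAffdet, Matrix.mul_one]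
        _ = -(Acf * Aff⁻¹) := by rw [this, Matrix.neg_mul]
    · intro hZ e j
      have hX0 : X = 0 := by
        rw [hX, hZ, Matrix.neg_mul, Matrix.mul_assoc, Matrix.nonsing_inv_mul Aff hAffdet,
          Matrix.mul_one, neg_add_cancel]
      have hYK : K⁻¹ * Y = 1 := by
        have : K = Y := by rw [hKXY, hX0, Matrix.zero_mul, zero_add]
        rw [← this, Matrix.nonsing_inv_mul K hKdet]
      rw [hM, hX0, hYK, fromBlocks_mulVec]
      simp
  · intro hZ e
    have hX0 : X = 0 := by
      rw [hX, hZ, Matrix.neg_mul, Matrix.mul_assoc, Matrix.nonsing_inv_mul Aff hAffdet,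
        Matrix.mul_one, neg_add_cancel]
    have hYK : K⁻¹ * Y = 1 := by
      have : K = Y := by rw [hKXY, hX0, Matrix.zero_mul, zero_add]
      rw [← this, Matrix.nonsing_inv_mul K hKdet]
    rw [hM, hX0, hYK, fromBlocks_mulVec]
    ext (i | j) <;> simp [mulVec, dotProduct, sub_eq_add_neg, Finset.sum_neg_distrib]
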